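/- Let f : (ℕ→ℕ) → Set (ℕ→ℕ) be a problem, let (a_n) be a sequence in dom f converging to a point a ∈ dom f, and let S = {a_n | n ∈ ℕ} ∪ {a}. If there is no F : (ℕ→ℕ) → (ℕ→ℕ) continuous on S with F x ∈ f x for all x ∈ S, then for every p ∈ f a there exists k ∈ ℕ such that for every N ∈ ℕ there exists j > N with f(a_j) ∩ {q | ∀ i ≤ k, q i = p i} = ∅. -/
import Mathlib

/-- The domain of a problem (multivalued function on Baire space). -/
def domP (f : (ℕ → ℕ) → Set (ℕ → ℕ)) : Set (ℕ → ℕ) := {p | f p ≠ ∅}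

theorem escape_from_limit_solution (f : (ℕ → ℕ) → Set (ℕ → ℕ)) (a : ℕ → ℕ)
    (aseq : ℕ → (ℕ → ℕ))
    (hconv : Filter.Tendsto aseq Filter.atTop (nhds a))
    (ha : a ∈ domP f) (han : ∀ n, aseq n ∈ domP f)
    (hdisc : ¬ ∃ F : (ℕ → ℕ) → (ℕ → ℕ),
        ContinuousOn F (Set.range aseq ∪ {a}) ∧
        ∀ x ∈ Set.range aseq ∪ {a}, F x ∈ f x) :
    ∀ p ∈ f a, ∃ k : ℕ, ∀ N : ℕ, ∃ j > N,
      f (aseq j) ∩ {q : ℕ → ℕ | ∀ i ≤ k, q i = p i} = ∅ := by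
  classical
  intro p hp
  by_contra hcon
  push_neg at hcon
  apply hdisc
  choose g hg using hcon
  set S : Set (ℕ → ℕ) := Set.range aseq ∪ {a} with hSdef
  set G : ℕ → ℕ := fun k => (Finset.range (k+1)).sup g with hGdef
  have hGmono : Monotone G := fun k l hkl =>
    Finset.sup_mono (Finset.range_subset_range.2 (by omega))
  have hG : ∀ k j, G k < j →
      (f (aseq j) ∩ {q : ℕ → ℕ | ∀ i ≤ k, q i = p i}).Nonempty := by
    intro k j h
    have hle : g k ≤ G k := Finset.le_sup (Finset.mem_range.2 (Nat.lt_succ_self k))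
    exact hg k j (lt_of_le_of_lt hle h)
  set m : ℕ → ℕ := fun j => Nat.findGreatest (fun k => G k < j) j with hmdef
  have hsel : ∀ j, ∃ q, q ∈ f (aseq j) ∧ (G 0 < j → ∀ i ≤ m j, q i = p i) := by
    intro j
    by_cases h0 : G 0 < j
    · have hspec : G (m j) < j := Nat.findGreatest_spec (P := fun k => G k < j) (Nat.zero_le j) h0
      obtain ⟨q, hq1, hq2⟩ := hG (m j) j hspec
      exact ⟨q, hq1, fun _ => hq2⟩
    · obtain ⟨q, hq⟩ := Set.nonempty_iff_ne_empty.2 (han j)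
      exact ⟨q, hq, fun h => absurd h h0⟩
  choose sel hsel1 hsel2 using hsel
  have hmge : ∀ i j, i ≤ j → G i < j → i ≤ m j := fun i j h1 h2 =>
    Nat.le_findGreatest h1 h2
  set F : (ℕ → ℕ) → (ℕ → ℕ) := fun x =>
    if x = a then p else if h : ∃ j, aseq j = x then sel (Nat.find h) else p
    with hFdef
  refine ⟨F, ?_, ?_⟩
  · -- continuity
    intro x hx
    by_cases hxa : x = a
    · have hFa : F x = p := by simp [hFdef, hxa]
      rw [ContinuousWithinAt, hFa, tendsto_pi_nhds]
      intro i
      set M := max (max (G 0) (G i)) i with hM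
      set D : Set (ℕ → ℕ) := (aseq '' Set.Iic M) \ {a} with hDdef
      have hDfin : D.Finite := (((Set.finite_Iic M).image _).subset Set.diff_subset)
      have haD : x ∉ D := fun h => h.2 hxa
      have hclaim : ∀ y ∈ S, y ∉ D → F y i = p i := by
        intro y hyS hyD
        by_cases hya : y = a
        · simp [hFdef, hya]
        · have hyr : y ∈ Set.range aseq := by
            rcases hyS with h | h
            · exact h
            · exact absurd h hya
          obtain ⟨j0, hj0⟩ := hyr
          have hex : ∃ j, aseq j = y := ⟨j0, hj0⟩
          have hFx : F y = sel (Nat.find hex) := by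
            simp [hFdef, hya, hex]
          set j := Nat.find hex with hj
          have hjx : aseq j = y := Nat.find_spec hex
          have hjM : M < j := by
            by_contra hle
            push_neg at hle
            exact hyD ⟨⟨j, hle, hjx⟩, hya⟩
          have h0 : G 0 < j := lt_of_le_of_lt (le_max_of_le_left (le_max_left _ _)) hjM
          have hGi : G i < j := lt_of_le_of_lt (le_max_of_le_left (le_max_right _ _)) hjM
          have hij : i ≤ j := le_of_lt (lt_of_le_of_lt (le_max_right _ _) hjM)
          rw [hFx]
          exact hsel2 j h0 i (hmge i j hij hGi)
      have hev : (fun _ : ℕ → ℕ => p i) =ᶠ[nhdsWithin x S] fun y => F y i := by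
        have h1 : Dᶜ ∈ nhds x :=
          (hDfin.isClosed.isOpen_compl).mem_nhds haD
        have h2 : Dᶜ ∈ nhdsWithin x S := nhdsWithin_le_nhds h1
        filter_upwards [h2, self_mem_nhdsWithin] with y hyD hyS
        exact (hclaim y hyS hyD).symm
      exact Filter.Tendsto.congr' hev tendsto_const_nhds
    · -- x isolated in S
      obtain ⟨U, V, hU, hV, hxU, haV, hUV⟩ := t2_separation hxa
      have hev : ∀ᶠ n in Filter.atTop, aseq n ∈ V := hconv (hV.mem_nhds haV)
      obtain ⟨N, hN⟩ := Filter.eventually_atTop.1 hev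
      set T : Set (ℕ → ℕ) := (aseq '' Set.Iio N) \ {x} with hTdef
      have hTfin : T.Finite := ((Set.finite_Iio N).image _).subset Set.diff_subset
      have hxT : x ∉ T := fun h => h.2 rfl
      have hW : U ∩ Tᶜ ∈ nhds x :=
        Filter.inter_mem (hU.mem_nhds hxU) ((hTfin.isClosed.isOpen_compl).mem_nhds hxT)
      have hsing : {x} ∈ nhdsWithin x S := by
        have h2 : U ∩ Tᶜ ∈ nhdsWithin x S := nhdsWithin_le_nhds hW
        have h3 : (U ∩ Tᶜ) ∩ S ∈ nhdsWithin x S :=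
          Filter.inter_mem h2 self_mem_nhdsWithin
        refine Filter.mem_of_superset h3 ?_
        rintro y ⟨⟨hyU, hyT⟩, hyS⟩
        rcases hyS with ⟨n, hn⟩ | hy
        · by_cases hnN : n < N
          · by_contra hyx
            exact hyT ⟨⟨n, hnN, hn⟩, fun h => hyx (by simpa [hn] using h)⟩
          · exfalso
            have : aseq n ∈ V := hN n (le_of_not_gt hnN)
            exact Set.disjoint_left.1 hUV hyU (hn ▸ this)
        · exfalso
          have hya : y = a := hy
          exact Set.disjoint_left.1 hUV (hya ▸ hyU) haV
      have hev2 : (fun _ : ℕ → ℕ => F x) =ᶠ[nhdsWithin x S] F := by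
        filter_upwards [hsing] with y hy
        rw [Set.mem_singleton_iff.1 hy]
      exact Filter.Tendsto.congr' hev2 tendsto_const_nhds
  · -- membership
    intro x hx
    by_cases hxa : x = a
    · rw [hxa]
      simpa [hFdef] using hp
    · have hxr : x ∈ Set.range aseq := by
        rcases hx with h | h
        · exact h
        · exact absurd h hxa
      obtain ⟨j0, hj0⟩ := hxr
      have hex : ∃ j, aseq j = x := ⟨j0, hj0⟩
      have hFx : F x = sel (Nat.find hex) := by simp [hFdef, hxa, hex]
      have hm := hsel1 (Nat.find hex)
      rw [Nat.find_spec hex] at hm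
      rw [hFx]; exact hm
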